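/- Let u, v ∈ 𝒜_n^* be highest-weight quasi-ribbon words. If wt(u) = wt(v), then u = v. -/

import Mathlib

/-!
Common setup: words over the alphabet `𝒜_n = {1,…,n}` (modelled as `List ℕ`),
quasi-Kashiwara operators, the quasi-crystal graph, Kashiwara operators,
quasi-ribbon words, and the hypoplactic congruence.
-/

namespace HypoCrystal

noncomputable section
open scoped Classical

/-- `u` is a word over the alphabet `𝒜_n = {1,…,n}`. -/
def IsWord (n : ℕ) (u : List ℕ) : Prop := ∀ a ∈ u, 1 ≤ a ∧ a ≤ n

/-- `u` has an `i`-inversion: some letter `i+1` occurs strictly to the left of some letter `i`. -/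
def HasInv (i : ℕ) (u : List ℕ) : Prop :=
  ∃ v w x : List ℕ, u = v ++ (i + 1) :: w ++ i :: x

/-- Replace the first (leftmost) occurrence of `a` by `b`, if any; otherwise `none`. -/
def replaceFirst (a b : ℕ) : List ℕ → Option (List ℕ)
  | [] => none
  | x :: xs => if x = a then some (b :: xs) else (replaceFirst a b xs).map (x :: ·)

/-- The quasi-Kashiwara raising operator `e_i` (partial map, `none` = undefined):
if `u` has an `i`-inversion it is undefined; otherwise it replaces the leftmost
letter `i+1` by `i` (undefined if there is no letter `i+1`). -/
def qe (i : ℕ) (u : List ℕ) : Option (List ℕ) :=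
  if HasInv i u then none else replaceFirst (i + 1) i u

/-- The quasi-Kashiwara lowering operator `f_i` (partial map, `none` = undefined):
if `u` has an `i`-inversion it is undefined; otherwise it replaces the rightmost
letter `i` by `i+1` (undefined if there is no letter `i`). -/
def qf (i : ℕ) (u : List ℕ) : Option (List ℕ) :=
  if HasInv i u then none else (replaceFirst i (i + 1) u.reverse).map List.reverse

/-- Weight of a word: `wt u a` is the number of occurrences of the letter `a` in `u`. -/
def wt (u : List ℕ) : ℕ → ℕ := fun a => u.count a

/-- There is an edge labelled `i` from `u` to `v` in the quasi-crystal graph `Γ(hypo_n)`. -/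
def Edge (n i : ℕ) (u v : List ℕ) : Prop := 1 ≤ i ∧ i < n ∧ qf i u = some v

/-- `u` and `v` are adjacent (in the underlying undirected graph) in `Γ(hypo_n)`. -/
def Adj (n : ℕ) (u v : List ℕ) : Prop := ∃ i, Edge n i u v ∨ Edge n i v u

/-- `v` lies in the connected component `Γ(hypo_n, u)` of `u` in the quasi-crystal graph. -/
def SameComp (n : ℕ) : List ℕ → List ℕ → Prop := Relation.ReflTransGen (Adj n)

/-- `u` is a highest-weight word: no raising operator `e_i` is defined on `u`. -/
def HighestWeight (n : ℕ) (u : List ℕ) : Prop := ∀ i, 1 ≤ i → i < n → qe i u = none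

/-- `θ` is a quasi-crystal isomorphism from the component of `u` onto the component of `v`:
a weight-preserving bijection preserving labelled edges in both directions. -/
def IsQCIso (n : ℕ) (u v : List ℕ) (θ : List ℕ → List ℕ) : Prop :=
  Set.BijOn θ {x | SameComp n u x} {y | SameComp n v y} ∧
  (∀ x, SameComp n u x → wt (θ x) = wt x) ∧
  (∀ x y, SameComp n u x → SameComp n u y → ∀ i, (Edge n i x y ↔ Edge n i (θ x) (θ y)))

/-- `u ∼ v`: there is a quasi-crystal isomorphism between the components of `u` and `v`
taking `u` to `v`. -/
def Sim (n : ℕ) (u v : List ℕ) : Prop :=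
  ∃ θ : List ℕ → List ℕ, IsQCIso n u v θ ∧ θ u = v

/-- The standardization of `u`: position `k` receives the rank (starting at 1) of the
pair `(u_k, k)` among all pairs `(u_l, l)` ordered lexicographically. -/
def std (u : List ℕ) : List ℕ :=
  (List.range u.length).map fun k =>
    1 + ((List.range u.length).filter fun l =>
      u.getD l 0 < u.getD k 0 ∨ (u.getD l 0 = u.getD k 0 ∧ l < k)).length

/-- The maximal strictly decreasing factors of a word (the columns of its
quasi-ribbon tabloid, each read bottom-to-top). -/
def decFactors : List ℕ → List (List ℕ)
  | [] => []
  | a :: rest =>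
    match decFactors rest with
    | (b :: f) :: fs => if b < a then (a :: b :: f) :: fs else [a] :: (b :: f) :: fs
    | l => [a] :: l

/-- `w` is a quasi-ribbon word: its quasi-ribbon tabloid is a quasi-ribbon tableau,
i.e. the bottom entry of each column is ≤ the top entry of the next column. -/
def IsQRWord (w : List ℕ) : Prop :=
  (decFactors w).Chain' fun c d => c.headD 0 ≤ d.getLastD 0

/-- Row lengths (top to bottom) of the ribbon diagram whose column heights
(left to right) are given. -/
def rowLengths : List ℕ → List ℕ
  | [] => []
  | [d] => List.replicate d 1
  | d :: e :: rest =>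
    List.replicate (d - 1) 1 ++
      (match rowLengths (e :: rest) with
       | [] => [1]
       | r :: rs => (r + 1) :: rs)

/-- The shape (as a composition, listed top row first) of the quasi-ribbon tabloid of `w`. -/
def shape (w : List ℕ) : List ℕ := rowLengths ((decFactors w).map List.length)

/-- Columns of the quasi-ribbon tableau of shape `α` whose `j`-th row consists
entirely of symbols `j`, where rows are labelled starting from `j₀`. -/
def hwCols : List ℕ → ℕ → List (List ℕ)
  | [], _ => []
  | [a], j => List.replicate a [j]
  | a :: b :: rest, j =>
    List.replicate (a - 1) [j] ++
      (match hwCols (b :: rest) (j + 1) with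
       | [] => [[j]]
       | c :: cs => (c ++ [j]) :: cs)

/-- The column reading of the quasi-ribbon tableau of shape `α` whose `j`-th row
consists entirely of symbols `j`. -/
def hwQR (α : List ℕ) : List ℕ := (hwCols α 1).flatten

/-- The defining relations `R_hypo` of the hypoplactic monoid of rank `n`. -/
inductive HypoRel (n : ℕ) : List ℕ → List ℕ → Prop
  | knuth1 {a b c : ℕ} : 1 ≤ a → a ≤ b → b < c → c ≤ n → HypoRel n [a, c, b] [c, a, b]
  | knuth2 {a b c : ℕ} : 1 ≤ a → a < b → b ≤ c → c ≤ n → HypoRel n [b, a, c] [b, c, a]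
  | quasi1 {a b c d : ℕ} : 1 ≤ a → a ≤ b → b < c → c ≤ d → d ≤ n →
      HypoRel n [c, a, d, b] [a, c, b, d]
  | quasi2 {a b c d : ℕ} : 1 ≤ a → a < b → b ≤ c → c < d → d ≤ n →
      HypoRel n [b, d, a, c] [d, b, c, a]

/-- The hypoplactic congruence `≡_hypo`: the congruence on the free monoid generated
by the relations `R_hypo`. -/
inductive HypoCong (n : ℕ) : List ℕ → List ℕ → Prop
  | of {u v} : HypoRel n u v → HypoCong n u v
  | refl (u) : HypoCong n u u
  | symm {u v} : HypoCong n u v → HypoCong n v u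
  | trans {u v w} : HypoCong n u v → HypoCong n v w → HypoCong n u w
  | append {u v u' v'} : HypoCong n u v → HypoCong n u' v' →
      HypoCong n (u ++ u') (v ++ v')

/-- The signature word of `u` for index `i`: each letter `i` becomes `(position, true)`
(that is, `+`) and each letter `i+1` becomes `(position, false)` (that is, `−`). -/
def signWord (i : ℕ) (u : List ℕ) : List (ℕ × Bool) :=
  ((List.range u.length).zip u).filterMap fun pa =>
    if pa.2 = i then some (pa.1, true)
    else if pa.2 = i + 1 then some (pa.1, false) else none

/-- Iteratively delete factors `−+` from a signature word, producing the reduced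
word `+^p −^q`. -/
def reduce : List (ℕ × Bool) → List (ℕ × Bool)
  | [] => []
  | x :: rest =>
    match reduce rest with
    | y :: rest' => if x.2 = false ∧ y.2 = true then rest' else x :: y :: rest'
    | [] => [x]

/-- The Kashiwara raising operator `ẽ_i`, computed by the signature rule: change to `i`
the letter `i+1` corresponding to the leftmost `−` of the reduced signature word. -/
def KE (i : ℕ) (u : List ℕ) : Option (List ℕ) :=
  (((reduce (signWord i u)).filter fun x => !x.2).head?).map fun x => u.set x.1 i

/-- The Kashiwara lowering operator `f̃_i`, computed by the signature rule: change to `i+1`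
the letter `i` corresponding to the rightmost `+` of the reduced signature word. -/
def KF (i : ℕ) (u : List ℕ) : Option (List ℕ) :=
  (((reduce (signWord i u)).filter fun x => x.2).getLast?).map fun x => u.set x.1 (i + 1)

/-- The Schützenberger involution on `𝒜_n^*`: reverse the word and replace each
letter `a` by `n − a + 1`. -/
def sharp (n : ℕ) (u : List ℕ) : List ℕ := u.reverse.map fun a => n + 1 - a

/-- The largest letter occurring in `u` (0 for the empty word). -/
def maxLetter (u : List ℕ) : ℕ := u.foldr max 0

/-- `β` is coarser than `α` (`β ⪯ α`): they have the same weight and every proper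
partial sum of `β` is a proper partial sum of `α`. -/
def Coarser (β α : List ℕ) : Prop :=
  β.sum = α.sum ∧ ∀ p < β.length, ∃ m < α.length, (β.take p).sum = (α.take m).sum

end
end HypoCrystal

namespace HypoCrystal

/-! ### Auxiliary development for Statement 7 -/

open List in
private instance : IsTrans ℕ (· > ·) := ⟨fun _ _ _ h h' => h'.trans h⟩

open List

private lemma decFactors_cons_run {rest : List ℕ} {b : ℕ} {f : List ℕ}
    {fs : List (List ℕ)} (a : ℕ) (h : decFactors rest = (b :: f) :: fs) :
    decFactors (a :: rest) =
      if b < a then (a :: b :: f) :: fs else [a] :: (b :: f) :: fs := by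
  rw [decFactors, h]

private lemma decFactors_cons_nil {rest : List ℕ} (a : ℕ)
    (h : decFactors rest = []) : decFactors (a :: rest) = [[a]] := by
  rw [decFactors, h]

private lemma decFactors_cons_nilrun {rest : List ℕ} {fs : List (List ℕ)} (a : ℕ)
    (h : decFactors rest = [] :: fs) : decFactors (a :: rest) = [a] :: [] :: fs := by
  rw [decFactors, h]

private lemma decFactors_flatten (w : List ℕ) : (decFactors w).flatten = w := by
  induction w with
  | nil => rfl
  | cons a rest ih =>
    rcases h : decFactors rest with _ | ⟨_ | ⟨b, f⟩, fs⟩ <;> rw [h] at ih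
    · rw [decFactors_cons_nil a h]; simp at ih ⊢; simp [ih]
    · rw [decFactors_cons_nilrun a h]; simp at ih ⊢; simp [ih]
    · rw [decFactors_cons_run a h]
      by_cases hba : b < a
      · rw [if_pos hba]; simp at ih ⊢; simp [ih]
      · rw [if_neg hba]; simp at ih ⊢; simp [ih]

private lemma decFactors_chain' (w : List ℕ) :
    ∀ r ∈ decFactors w, r.Chain' (· > ·) := by
  induction w with
  | nil => simp [decFactors]
  | cons a rest ih =>
    rcases h : decFactors rest with _ | ⟨_ | ⟨b, f⟩, fs⟩ <;> rw [h] at ih <;>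
        intro r hr
    · rw [decFactors_cons_nil a h] at hr; simp at hr; simp [hr, List.Chain', List.isChain_singleton]
    · rw [decFactors_cons_nilrun a h, List.mem_cons] at hr
      rcases hr with rfl | hr
      · simp [List.Chain', List.isChain_singleton]
      · exact ih _ hr
    · rw [decFactors_cons_run a h] at hr
      by_cases hba : b < a
      · rw [if_pos hba] at hr
        rw [List.mem_cons] at hr
        rcases hr with rfl | hr
        · simp only [List.Chain', List.isChain_cons_cons]
          exact ⟨hba, ih _ (by simp)⟩
        · exact ih _ (List.mem_cons_of_mem _ hr)
      · rw [if_neg hba] at hr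
        rw [List.mem_cons] at hr
        rcases hr with rfl | hr
        · simp [List.Chain', List.isChain_singleton]
        · exact ih _ hr

private lemma decFactors_ne_nil (w : List ℕ) : ∀ r ∈ decFactors w, r ≠ [] := by
  induction w with
  | nil => simp [decFactors]
  | cons a rest ih =>
    rcases h : decFactors rest with _ | ⟨_ | ⟨b, f⟩, fs⟩ <;> rw [h] at ih <;>
        intro r hr
    · rw [decFactors_cons_nil a h] at hr; simp at hr; simp [hr]
    · rw [decFactors_cons_nilrun a h, List.mem_cons] at hr
      rcases hr with rfl | hr
      · simp
      · exact ih _ hr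
    · rw [decFactors_cons_run a h] at hr
      by_cases hba : b < a
      · rw [if_pos hba] at hr
        rw [List.mem_cons] at hr
        rcases hr with rfl | hr
        · simp
        · exact ih _ (List.mem_cons_of_mem _ hr)
      · rw [if_neg hba] at hr
        rw [List.mem_cons] at hr
        rcases hr with rfl | hr
        · simp
        · exact ih _ hr

private lemma le_headD_of_mem {l : List ℕ} (h : l.Chain' (· > ·)) {y : ℕ}
    (hy : y ∈ l) : y ≤ l.headD 0 := by
  cases l with
  | nil => cases hy
  | cons a t =>
    have hp := List.isChain_iff_pairwise.mp h
    rw [List.pairwise_cons] at hp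
    rw [List.mem_cons] at hy
    rcases hy with rfl | hy
    · exact le_refl _
    · exact le_of_lt (hp.1 y hy)

private lemma getLastD_le_of_mem :
    ∀ l : List ℕ, l.Chain' (· > ·) → ∀ y ∈ l, l.getLastD 0 ≤ y := by
  intro l
  induction l with
  | nil => intro _ y hy; cases hy
  | cons a t ih =>
    intro h y hy
    cases t with
    | nil =>
      rw [List.mem_cons] at hy
      rcases hy with rfl | hy
      · simp
      · cases hy
    | cons b t' =>
      simp only [List.Chain', List.isChain_cons_cons] at h
      have hlast : (a :: b :: t').getLastD 0 = (b :: t').getLastD 0 := by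
        simp [List.getLastD_cons]
      rw [hlast]
      rw [List.mem_cons] at hy
      rcases hy with rfl | hy
      · exact le_trans (ih h.2 b (by simp)) (le_of_lt h.1)
      · exact ih h.2 y hy

private lemma getLastD_mem {l : List ℕ} (h : l ≠ []) : l.getLastD 0 ∈ l := by
  induction l with
  | nil => exact absurd rfl h
  | cons a t ih =>
    cases t with
    | nil => simp
    | cons b t' =>
      have hlast : (a :: b :: t').getLastD 0 = (b :: t').getLastD 0 := by
        simp [List.getLastD_cons]
      rw [hlast]
      exact List.mem_cons_of_mem _ (ih (by simp))

private lemma head_le_of_later :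
    ∀ (rs : List (List ℕ)) (r : List ℕ),
    (∀ s ∈ r :: rs, s ≠ []) → (∀ s ∈ r :: rs, s.Chain' (· > ·)) →
    (r :: rs).Chain' (fun c d => c.headD 0 ≤ d.getLastD 0) →
    ∀ s ∈ rs, ∀ y ∈ s, r.headD 0 ≤ y := by
  intro rs
  induction rs with
  | nil => simp
  | cons s₀ rs ih =>
    intro r hne hdec hch s hs y hy
    simp only [List.Chain', List.isChain_cons_cons] at hch
    rw [List.mem_cons] at hs
    rcases hs with rfl | hs
    · exact le_trans hch.1 (getLastD_le_of_mem _ (hdec s (by simp)) y hy)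
    · have hrec := ih s₀ (fun t ht => hne t (List.mem_cons_of_mem _ ht))
        (fun t ht => hdec t (List.mem_cons_of_mem _ ht)) hch.2 s hs y hy
      refine le_trans (le_trans hch.1 ?_) hrec
      exact le_headD_of_mem (hdec s₀ (by simp)) (getLastD_mem (hne s₀ (by simp)))

private lemma flatten_split :
    ∀ (rs : List (List ℕ)) (A B : List ℕ) (x : ℕ),
    rs.flatten = A ++ x :: B →
    ∃ rs₁ r₁ r₂ rs₂, rs = rs₁ ++ (r₁ ++ x :: r₂) :: rs₂ ∧
      A = rs₁.flatten ++ r₁ ∧ B = r₂ ++ rs₂.flatten := by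
  intro rs
  induction rs with
  | nil =>
    intro A B x h
    simp at h
  | cons r rs ih =>
    intro A B x h
    rw [List.flatten_cons] at h
    rcases List.append_eq_append_iff.mp h with ⟨A', h1, h2⟩ | ⟨c', h1, h2⟩
    · obtain ⟨rs₁, r₁, r₂, rs₂, e1, e2, e3⟩ := ih A' B x h2
      exact ⟨r :: rs₁, r₁, r₂, rs₂, by rw [e1, List.cons_append],
        by simp [h1, e2], e3⟩
    · cases c' with
      | nil =>
        simp at h2 h1
        obtain ⟨rs₁, r₁, r₂, rs₂, e1, e2, e3⟩ := ih [] B x h2.symm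
        refine ⟨r :: rs₁, r₁, r₂, rs₂, by rw [e1, List.cons_append], ?_, e3⟩
        have h5 : rs₁.flatten = [] ∧ r₁ = [] := by
          constructor
          · cases hfl : rs₁.flatten with
            | nil => rfl
            | cons z zs => exfalso; rw [hfl] at e2; simp at e2
          · cases hr₁ : r₁ with
            | nil => rfl
            | cons z zs =>
              exfalso; rw [hr₁] at e2
              rcases List.append_eq_nil_iff.mp e2.symm with ⟨_, h6⟩
              simp at h6
        simp [h1, h5.1, h5.2]
      | cons z c'' =>
        obtain ⟨hz, hB⟩ := List.cons.inj h2
        exact ⟨[], A, c'', rs, by simp [h1, hz], by simp, by simp [hB]⟩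

/-- Word-level characterization used throughout: every "inversion pattern"
in a quasi-ribbon word is bridged by a strictly decreasing segment. -/
private def WQR (w : List ℕ) : Prop :=
  ∀ A B C : List ℕ, ∀ x y : ℕ, w = A ++ x :: (B ++ y :: C) → y < x →
    (x :: (B ++ [y])).Chain' (· > ·)

private lemma wqr_of_isQRWord {w : List ℕ} (h : IsQRWord w) : WQR w := by
  intro A B C x y hdecomp hyx
  have hfl := decFactors_flatten w
  obtain ⟨rs₁, r₁, r₂, rs₂, e1, e2, e3⟩ :=
    flatten_split (decFactors w) A (B ++ y :: C) x (by rw [hfl, hdecomp])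
  set run := r₁ ++ x :: r₂ with hrun
  have hrunmem : run ∈ decFactors w := by rw [e1]; simp
  have hrundec : run.Chain' (· > ·) := decFactors_chain' w run hrunmem
  have hcontr : y ∈ rs₂.flatten → False := by
    intro hy2
    obtain ⟨s, hs, hys⟩ := List.mem_flatten.mp hy2
    have hch : (run :: rs₂).Chain' (fun c d => c.headD 0 ≤ d.getLastD 0) := by
      have h' := h
      unfold IsQRWord at h'
      rw [e1] at h'; simp only [List.Chain', List.isChain_append] at h'
      exact h'.2.1
    have hle : run.headD 0 ≤ y := by
      refine head_le_of_later rs₂ run ?_ ?_ hch s hs y hys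
      · intro t ht
        rw [List.mem_cons] at ht
        rcases ht with rfl | ht
        · simp [hrun]
        · refine decFactors_ne_nil w t ?_
          rw [e1]
          exact List.mem_append_right _ (List.mem_cons_of_mem _ ht)
      · intro t ht
        rw [List.mem_cons] at ht
        rcases ht with rfl | ht
        · exact hrundec
        · refine decFactors_chain' w t ?_
          rw [e1]
          exact List.mem_append_right _ (List.mem_cons_of_mem _ ht)
    have hx : x ≤ run.headD 0 := le_headD_of_mem hrundec (by simp [hrun])
    omega
  rcases List.append_eq_append_iff.mp e3.symm with ⟨a', h1, h2⟩ | ⟨c', h1, h2⟩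
  · exact absurd (by rw [h2]; simp : y ∈ rs₂.flatten) (fun hh => hcontr hh)
  · cases c' with
    | nil =>
      simp at h2
      exact absurd (by rw [← h2]; simp : y ∈ rs₂.flatten) (fun hh => hcontr hh)
    | cons y' c'' =>
      obtain ⟨hy', hr2⟩ := List.cons.inj h2
      have hsub : List.Sublist (x :: (B ++ [y])) run := by
        rw [hrun, h1, ← hy']
        refine List.Sublist.trans ?_ (List.sublist_append_right r₁ _)
        refine List.Sublist.cons₂ x ?_
        exact List.Sublist.append_left (List.sublist_append_left [y] c'') B
      exact List.isChain_iff_pairwise.mpr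
        ((List.isChain_iff_pairwise.mp hrundec).sublist hsub)

/-- `WQR` is inherited by sublists. -/
private lemma wqr_sublist {w w' : List ℕ} (h : WQR w) (hs : List.Sublist w' w) :
    WQR w' := by
  intro A B C x y hdecomp hyx
  subst hdecomp
  obtain ⟨r₁, r₂, hw, _, hs₂⟩ := List.append_sublist_iff.mp hs
  obtain ⟨s₁, s₂, hr₂, hxs₁, hs₃⟩ := List.cons_sublist_iff.mp hs₂
  obtain ⟨p, q, hps⟩ := List.append_of_mem hxs₁
  obtain ⟨t₁, t₂, hst, hBt₁, ht₂⟩ := List.append_sublist_iff.mp hs₃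
  obtain ⟨p₂, q₂, ht₂', hyp₂, hCq₂⟩ := List.cons_sublist_iff.mp ht₂
  obtain ⟨p₃, q₃, hp₂⟩ := List.append_of_mem hyp₂
  have hwdecomp : w = (r₁ ++ p) ++ x :: ((q ++ t₁ ++ p₃) ++ y :: (q₃ ++ q₂)) := by
    rw [hw, hr₂, hps, hst, ht₂', hp₂]; simp
  have hchain := h _ _ _ x y hwdecomp hyx
  have hBsub : List.Sublist B (q ++ t₁ ++ p₃) := by
    refine List.Sublist.trans hBt₁ ?_
    refine List.Sublist.trans (List.sublist_append_left t₁ p₃) ?_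
    rw [List.append_assoc]
    exact List.sublist_append_right q _
  have hsub : List.Sublist (x :: (B ++ [y])) (x :: ((q ++ t₁ ++ p₃) ++ [y])) :=
    List.Sublist.cons₂ x (List.Sublist.append_right hBsub [y])
  exact List.isChain_iff_pairwise.mpr
    ((List.isChain_iff_pairwise.mp hchain).sublist hsub)

private lemma replaceFirst_eq_none {a b : ℕ} :
    ∀ {l : List ℕ}, replaceFirst a b l = none ↔ a ∉ l := by
  intro l
  induction l with
  | nil => simp [replaceFirst]
  | cons x xs ih =>
    rw [replaceFirst]
    by_cases hx : x = a
    · rw [if_pos hx]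
      simp [hx]
    · rw [if_neg hx]
      rw [Option.map_eq_none_iff, ih]
      constructor
      · intro h hmem
        rcases List.mem_cons.mp hmem with rfl | hm
        · exact hx rfl
        · exact h hm
      · intro h hm
        exact h (List.mem_cons_of_mem _ hm)

private lemma hasInv_filter {i M : ℕ} {u : List ℕ} (h : HasInv i u)
    (h1 : i ≠ M) (h2 : i + 1 ≠ M) : HasInv i (u.filter (· ≠ M)) := by
  obtain ⟨A, B, C, rfl⟩ := h
  refine ⟨A.filter (· ≠ M), B.filter (· ≠ M), C.filter (· ≠ M), ?_⟩
  simp [List.filter_append, List.filter_cons, h1, h2]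

private lemma le_maxLetter {u : List ℕ} {a : ℕ} (h : a ∈ u) : a ≤ maxLetter u := by
  induction u with
  | nil => cases h
  | cons b t ih =>
    rw [List.mem_cons] at h
    have he : maxLetter (b :: t) = max b (maxLetter t) := rfl
    rw [he]
    rcases h with rfl | h
    · exact le_max_left _ _
    · exact le_trans (ih h) (le_max_right _ _)

private lemma maxLetter_le {u : List ℕ} {k : ℕ} (h : ∀ a ∈ u, a ≤ k) :
    maxLetter u ≤ k := by
  induction u with
  | nil => exact Nat.zero_le k
  | cons b t ih =>
    have he : maxLetter (b :: t) = max b (maxLetter t) := rfl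
    rw [he]
    exact max_le (h b (by simp)) (ih fun a ha => h a (List.mem_cons_of_mem _ ha))

private lemma maxLetter_mem {u : List ℕ} (h : u ≠ []) : maxLetter u ∈ u := by
  induction u with
  | nil => exact absurd rfl h
  | cons b t ih =>
    have he : maxLetter (b :: t) = max b (maxLetter t) := rfl
    cases t with
    | nil =>
      rw [he]
      simp [maxLetter]
    | cons c t' =>
      rw [he]
      rcases le_total b (maxLetter (c :: t')) with hle | hle
      · rw [max_eq_right hle]
        exact List.mem_cons_of_mem _ (ih (by simp))
      · rw [max_eq_left hle]
        simp

private lemma mem_iff_mem_of_wt {u v : List ℕ} (h : wt u = wt v) {a : ℕ} :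
    a ∈ u ↔ a ∈ v := by
  have hc : u.count a = v.count a := congrFun h a
  rw [← List.count_pos_iff, ← List.count_pos_iff, hc]

private lemma maxLetter_le_of_wt {u v : List ℕ} (h : wt u = wt v) :
    maxLetter u ≤ maxLetter v := by
  rcases eq_or_ne u [] with rfl | hne
  · exact Nat.zero_le _
  · exact le_maxLetter ((mem_iff_mem_of_wt h).mp (maxLetter_mem hne))

private lemma maxLetter_eq_of_wt {u v : List ℕ} (h : wt u = wt v) :
    maxLetter u = maxLetter v :=
  le_antisymm (maxLetter_le_of_wt h) (maxLetter_le_of_wt h.symm)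

private lemma last_occ_unique {a : ℕ} :
    ∀ (A₁ : List ℕ) {A₂ S₁ S₂ : List ℕ}, a ∉ S₁ → a ∉ S₂ →
    A₁ ++ a :: S₁ = A₂ ++ a :: S₂ → A₁ = A₂ ∧ S₁ = S₂ := by
  intro A₁
  induction A₁ with
  | nil =>
    intro A₂ S₁ S₂ h1 h2 h
    cases A₂ with
    | nil =>
      simp at h
      exact ⟨rfl, h⟩
    | cons b A₂' =>
      exfalso
      simp at h
      obtain ⟨rfl, h⟩ := h
      exact h1 (by rw [h]; simp)
  | cons c A₁' ih =>
    intro A₂ S₁ S₂ h1 h2 h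
    cases A₂ with
    | nil =>
      exfalso
      simp at h
      obtain ⟨rfl, h⟩ := h
      exact h2 (by rw [← h]; simp)
    | cons b A₂' =>
      simp at h
      obtain ⟨rfl, h⟩ := h
      obtain ⟨e1, e2⟩ := ih h1 h2 h
      exact ⟨by rw [e1], e2⟩

private lemma suffix_replicate (m : ℕ) :
    ∀ C : List ℕ,
    (∀ C₁ C₂ C₃ : List ℕ, ∀ z : ℕ, C = C₁ ++ m :: (C₂ ++ z :: C₃) → z = m) →
    ∃ S k, C = S ++ List.replicate k m ∧ m ∉ S := by
  intro C
  induction C with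
  | nil => exact fun _ => ⟨[], 0, by simp, by simp⟩
  | cons a R ih =>
    intro hyp
    obtain ⟨S, k, hR, hmS⟩ :=
      ih (fun C₁ C₂ C₃ z hz => hyp (a :: C₁) C₂ C₃ z (by rw [hz]; simp))
    by_cases ha : a = m
    · subst ha
      cases S with
      | nil =>
        refine ⟨[], k + 1, ?_, by simp⟩
        rw [List.replicate_succ]
        simp [hR]
      | cons s₀ S' =>
        exfalso
        have hs₀ : s₀ = a :=
          hyp [] [] (S' ++ List.replicate k a) s₀ (by rw [hR]; simp)
        exact hmS (by rw [hs₀]; simp)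
    · refine ⟨a :: S, k, by rw [List.cons_append, hR], ?_⟩
      intro hm
      rcases List.mem_cons.mp hm with h' | h'
      · exact ha h'.symm
      · exact hmS h'

/-- Structure of a highest-weight quasi-ribbon word with maximum letter `M ≥ 2`. -/
private lemma struct {n M : ℕ} {u : List ℕ} (hu : IsWord n u) (hq : WQR u)
    (hh : HighestWeight n u) (hM : maxLetter u = M) (h2 : 2 ≤ M) :
    ∃ A S k, u = A ++ M :: ((M - 1) :: (S ++ List.replicate k M)) ∧
      M ∉ A ∧ M ∉ S ∧ (M - 1) ∉ S := by
  have hune : u ≠ [] := by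
    intro h
    rw [h] at hM
    simp [maxLetter] at hM
    omega
  have hMem : M ∈ u := hM ▸ maxLetter_mem hune
  have hMn : M ≤ n := (hu M hMem).2
  have hinv : HasInv (M - 1) u := by
    have h3 := hh (M - 1) (by omega) (by omega)
    unfold qe at h3
    split_ifs at h3 with h4
    · exact h4
    · rw [replaceFirst_eq_none] at h3
      have hM1 : M - 1 + 1 = M := by omega
      rw [hM1] at h3
      exact absurd hMem h3
  obtain ⟨A, B, C, hdec0⟩ := hinv
  have hM1 : M - 1 + 1 = M := by omega
  rw [hM1] at hdec0
  have hdec1 : u = A ++ M :: (B ++ (M - 1) :: C) := by rw [hdec0]; simp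
  have hch := hq A B C M (M - 1) hdec1 (by omega)
  have hB : B = [] := by
    rw [List.eq_nil_iff_forall_not_mem]
    intro b hb
    have hp := List.isChain_iff_pairwise.mp hch
    rw [List.pairwise_cons] at hp
    have h5 : M > b := hp.1 b (List.mem_append_left _ hb)
    have h6 : b > M - 1 := (List.pairwise_append.mp hp.2).2.2 b hb (M - 1) (by simp)
    omega
  subst hB
  rw [List.nil_append] at hdec1
  have hMA : M ∉ A := by
    intro hmem'
    obtain ⟨A₁, A₂, rfl⟩ := List.append_of_mem hmem'
    have hch2 := hq A₁ (A₂ ++ [M]) C M (M - 1) (by rw [hdec1]; simp) (by omega)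
    have hp := List.isChain_iff_pairwise.mp hch2
    rw [List.pairwise_cons] at hp
    have := hp.1 M (by simp)
    omega
  have hC1 : (M - 1) ∉ C := by
    intro hmem'
    obtain ⟨C₁, C₂, rfl⟩ := List.append_of_mem hmem'
    have hch2 := hq A ((M - 1) :: C₁) C₂ M (M - 1) (by rw [hdec1]; simp) (by omega)
    have hp := List.isChain_iff_pairwise.mp hch2
    have := (List.pairwise_append.mp (List.pairwise_cons.mp hp).2).2.2
      (M - 1) (by simp) (M - 1) (by simp)
    omega
  have hkey : ∀ C₁ C₂ C₃ : List ℕ, ∀ z : ℕ, C = C₁ ++ M :: (C₂ ++ z :: C₃) → z = M := by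
    intro C₁ C₂ C₃ z hCdec
    by_contra hzM
    have hzu : z ∈ u := by rw [hdec1, hCdec]; simp
    have hzlt : z < M := by
      have := le_maxLetter hzu
      rw [hM] at this
      omega
    have hch2 := hq A ((M - 1) :: C₁ ++ M :: C₂) C₃ M z
      (by rw [hdec1, hCdec]; simp) hzlt
    have hp := List.isChain_iff_pairwise.mp hch2
    rw [List.pairwise_cons] at hp
    have := hp.1 M (by simp)
    omega
  obtain ⟨S, k, hCS, hMS⟩ := suffix_replicate M C hkey
  refine ⟨A, S, k, ?_, hMA, hMS,
    fun hmem' => hC1 (by rw [hCS]; exact List.mem_append_left _ hmem')⟩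
  rw [hdec1, hCS]

private lemma aux (n : ℕ) :
    ∀ (m : ℕ) (u v : List ℕ), IsWord n u → IsWord n v → WQR u → WQR v →
      HighestWeight n u → HighestWeight n v → wt u = wt v →
      maxLetter u ≤ m → u = v := by
  intro m
  induction m with
  | zero =>
    intro u v hu hv _ _ _ _ hwt hm
    have hu0 : u = [] := by
      rw [List.eq_nil_iff_forall_not_mem]
      intro a ha
      have h1 := (hu a ha).1
      have h2 := le_maxLetter ha
      omega
    have hmv : maxLetter v ≤ 0 := by rw [← maxLetter_eq_of_wt hwt]; exact hm
    have hv0 : v = [] := by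
      rw [List.eq_nil_iff_forall_not_mem]
      intro a ha
      have h1 := (hv a ha).1
      have h2 := le_maxLetter ha
      omega
    rw [hu0, hv0]
  | succ m ih =>
    intro u v hu hv hqu hqv hhu hhv hwt hm
    by_cases hle : maxLetter u ≤ m
    · exact ih u v hu hv hqu hqv hhu hhv hwt hle
    have hMu : maxLetter u = m + 1 := by omega
    have hMv : maxLetter v = m + 1 := by rw [← maxLetter_eq_of_wt hwt]; exact hMu
    by_cases hm0 : m = 0
    · subst hm0
      have h1u : ∀ a ∈ u, a = 1 := fun a ha => by
        have h1 := (hu a ha).1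
        have h2 := le_maxLetter ha
        omega
      have h1v : ∀ a ∈ v, a = 1 := fun a ha => by
        have h1 := (hv a ha).1
        have h2 := le_maxLetter ha
        omega
      have hlu : u = List.replicate u.length 1 := List.eq_replicate_of_mem h1u
      have hlv : v = List.replicate v.length 1 := List.eq_replicate_of_mem h1v
      have hcount : u.count 1 = v.count 1 := congrFun hwt 1
      have hlen : u.length = v.length := by
        rw [← List.count_eq_length.mpr (fun b hb => (h1u b hb).symm),
          ← List.count_eq_length.mpr (fun b hb => (h1v b hb).symm), hcount]
      rw [hlu, hlv, hlen]
    · set M := m + 1 with hMdef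
      have h2M : 2 ≤ M := by omega
      obtain ⟨Au, Su, ku, hdu, hAu, hSu, hS1u⟩ := struct hu hqu hhu hMu h2M
      obtain ⟨Av, Sv, kv, hdv, hAv, hSv, hS1v⟩ := struct hv hqv hhv hMv h2M
      have hfilter : ∀ (A S : List ℕ) (k : ℕ), M ∉ A → M ∉ S →
          (A ++ M :: ((M - 1) :: (S ++ List.replicate k M))).filter (· ≠ M) =
            A ++ (M - 1) :: S := by
        intro A S k hA hS
        have hM1 : ((M : ℕ) - 1) ≠ M := by omega
        rw [List.filter_append, List.filter_cons_of_neg (by simp),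
          List.filter_cons_of_pos (by simpa using hM1), List.filter_append,
          List.filter_eq_self.mpr
            (fun a ha => by simpa using ne_of_mem_of_not_mem ha hA),
          List.filter_eq_self.mpr
            (fun a ha => by simpa using ne_of_mem_of_not_mem ha hS),
          List.filter_eq_nil_iff.mpr
            (fun a ha => by simp [List.eq_of_mem_replicate ha]),
          List.append_nil]
      have hfu : u.filter (· ≠ M) = Au ++ (M - 1) :: Su := by
        rw [hdu]; exact hfilter Au Su ku hAu hSu
      have hfv : v.filter (· ≠ M) = Av ++ (M - 1) :: Sv := by
        rw [hdv]; exact hfilter Av Sv kv hAv hSv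
      have hu' : IsWord n (u.filter (· ≠ M)) :=
        fun a ha => hu a (List.mem_of_mem_filter ha)
      have hv' : IsWord n (v.filter (· ≠ M)) :=
        fun a ha => hv a (List.mem_of_mem_filter ha)
      have hqu' : WQR (u.filter (· ≠ M)) := wqr_sublist hqu List.filter_sublist
      have hqv' : WQR (v.filter (· ≠ M)) := wqr_sublist hqv List.filter_sublist
      have hhw : ∀ w : List ℕ, maxLetter w = M → HighestWeight n w →
          HighestWeight n (w.filter (· ≠ M)) := by
        intro w hMw hhw
        intro i h1i hin
        unfold qe
        split_ifs with hinv
        · rfl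
        · rw [replaceFirst_eq_none]
          intro hmem
          have hiu : i + 1 ∈ w := List.mem_of_mem_filter hmem
          have hne : (i + 1) ≠ M := by simpa using List.of_mem_filter hmem
          have hile : i + 1 ≤ M := by
            have h5 := le_maxLetter hiu
            rw [hMw] at h5
            exact h5
          have h3 := hhw i h1i hin
          unfold qe at h3
          split_ifs at h3 with h4
          · exact hinv (hasInv_filter h4 (by omega) hne)
          · rw [replaceFirst_eq_none] at h3
            exact h3 hiu
      have hhu' := hhw u hMu hhu
      have hhv' := hhw v hMv hhv
      have hwt' : wt (u.filter (· ≠ M)) = wt (v.filter (· ≠ M)) := by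
        funext a
        by_cases haM : a = M
        · subst haM
          have e1 : (u.filter (· ≠ M)).count M = 0 := List.count_eq_zero.mpr (by
            intro hmem
            exact absurd (List.of_mem_filter hmem) (by simp))
          have e2 : (v.filter (· ≠ M)).count M = 0 := List.count_eq_zero.mpr (by
            intro hmem
            exact absurd (List.of_mem_filter hmem) (by simp))
          show (u.filter (· ≠ M)).count M = (v.filter (· ≠ M)).count M
          rw [e1, e2]
        · show (u.filter (· ≠ M)).count a = (v.filter (· ≠ M)).count a
          rw [List.count_filter (by simpa using haM),
            List.count_filter (by simpa using haM)]
          exact congrFun hwt a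
      have hmu' : maxLetter (u.filter (· ≠ M)) ≤ m := maxLetter_le (fun a ha => by
        have h1 : a ≤ M := by
          have h5 := le_maxLetter (List.mem_of_mem_filter ha)
          rw [hMu] at h5
          exact h5
        have h2 : a ≠ M := by simpa using List.of_mem_filter ha
        omega)
      have heq := ih (u.filter (· ≠ M)) (v.filter (· ≠ M))
        hu' hv' hqu' hqv' hhu' hhv' hwt' hmu'
      rw [hfu, hfv] at heq
      obtain ⟨hAe, hSe⟩ := last_occ_unique Au hS1u hS1v heq
      have hM1 : ((M : ℕ) - 1) ≠ M := by omega
      have hcu : u.count M = ku + 1 := by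
        rw [hdu]
        simp [List.count_append, List.count_cons, List.count_replicate,
          List.count_eq_zero.mpr hAu, List.count_eq_zero.mpr hSu, hM1]
      have hcv : v.count M = kv + 1 := by
        rw [hdv]
        simp [List.count_append, List.count_cons, List.count_replicate,
          List.count_eq_zero.mpr hAv, List.count_eq_zero.mpr hSv, hM1]
      have hk : ku = kv := by
        have hc : u.count M = v.count M := congrFun hwt M
        rw [hcu, hcv] at hc
        omega
      rw [hdu, hdv, hAe, hSe, hk]

/-- Let `u, v ∈ 𝒜_n^*` be highest-weight quasi-ribbon words.
If `wt(u) = wt(v)`, then `u = v`. -/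
theorem highestWeight_quasiRibbon_eq_of_weight_eq (n : ℕ) (u v : List ℕ)
    (hu : IsWord n u) (hv : IsWord n v) (hqu : IsQRWord u) (hqv : IsQRWord v)
    (hhu : HighestWeight n u) (hhv : HighestWeight n v)
    (hwt : wt u = wt v) : u = v :=
  aux n (maxLetter u) u v hu hv (wqr_of_isQRWord hqu) (wqr_of_isQRWord hqv)
    hhu hhv hwt le_rfl

end HypoCrystal
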